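/- The Barnes G-function satisfies the duplication-type formula G(2N+1) = 2^{N(2N-1)} π^{-N-1/2} G(1/2)^{-2} · G(N+1/2) · G(N+1)² · G(N+3/2) for all positive integers N. -/

import Mathlib

open Real

lemma gamma_key (n : ℕ) :
    Real.Gamma (2 * n + 2) * Real.Gamma (2 * n + 1)
      = 2 ^ (4 * n + 1) * Real.pi⁻¹ *
        (Real.Gamma ((n : ℝ) + 1 / 2) * Real.Gamma ((n : ℝ) + 1) ^ 2 *
          Real.Gamma ((n : ℝ) + 3 / 2)) := by
  have h1 := Real.Gamma_mul_Gamma_add_half ((n : ℝ) + 1 / 2)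
  have h2 := Real.Gamma_mul_Gamma_add_half ((n : ℝ) + 1)
  have e1 : (2 : ℝ) * ((n : ℝ) + 1 / 2) = 2 * n + 1 := by ring
  have e2 : (2 : ℝ) * ((n : ℝ) + 1) = 2 * n + 2 := by ring
  have e3 : (1 : ℝ) - (2 * (n:ℝ) + 1) = -((2 * n : ℕ) : ℝ) := by push_cast; ring
  have e4 : (1 : ℝ) - (2 * (n:ℝ) + 2) = -((2 * n + 1 : ℕ) : ℝ) := by push_cast; ring
  rw [e1, e3] at h1
  rw [e2, e4] at h2
  rw [Real.rpow_neg (by norm_num), Real.rpow_natCast] at h1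
  rw [Real.rpow_neg (by norm_num), Real.rpow_natCast] at h2
  have hadd : ((n : ℝ) + 1 / 2) + 1 / 2 = (n : ℝ) + 1 := by ring
  have hadd2 : ((n : ℝ) + 1) + 1 / 2 = (n : ℝ) + 3 / 2 := by ring
  rw [hadd] at h1
  rw [hadd2] at h2
  have hs : Real.sqrt π ^ 2 = π := Real.sq_sqrt pi_pos.le
  have hpow : (2 : ℝ) ^ (4 * n + 1) = 2 ^ (2 * n) * 2 ^ (2 * n + 1) := by
    rw [← pow_add]; ring_nf
  have key : Real.Gamma ((n:ℝ)+1/2) * Real.Gamma ((n:ℝ)+1) ^ 2 * Real.Gamma ((n:ℝ)+3/2)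
      = (Real.Gamma ((n:ℝ)+1/2) * Real.Gamma ((n:ℝ)+1)) *
        (Real.Gamma ((n:ℝ)+1) * Real.Gamma ((n:ℝ)+3/2)) := by ring
  rw [key, h1, h2, hpow]
  have hpi : π ≠ 0 := pi_ne_zero
  have h2n : ((2:ℝ) ^ (2*n)) ≠ 0 := by positivity
  have h2n1 : ((2:ℝ) ^ (2*n+1)) ≠ 0 := by positivity
  field_simp
  linear_combination (-1 : ℝ) * hs

theorem barnesG_duplication (G : ℝ → ℝ)
    (hG1 : G 1 = 1)
    (hGrec : ∀ z : ℝ, 0 < z → G (z + 1) = Real.Gamma z * G z)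
    (hGhalf : G (1 / 2) ≠ 0)
    (N : ℕ) (hN : 1 ≤ N) :
    G (2 * N + 1)
      = 2 ^ (N * (2 * N - 1)) * Real.pi ^ (-(N : ℝ) - 1 / 2) * (G (1 / 2))⁻¹ ^ 2 *
          G ((N : ℝ) + 1 / 2) * (G ((N : ℝ) + 1)) ^ 2 * G ((N : ℝ) + 3 / 2) := by
  induction N, hN using Nat.le_induction with
  | base =>
    have g2 : G 2 = 1 := by
      have := hGrec 1 one_pos
      norm_num [Real.Gamma_one, hG1] at this
      exact this
    have g3 : G 3 = 1 := by
      have := hGrec 2 two_pos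
      norm_num [Real.Gamma_two, g2] at this
      exact this
    have g32 : G (3/2) = Real.sqrt π * G (1/2) := by
      have := hGrec (1/2) (by norm_num)
      norm_num [Real.Gamma_one_half_eq] at this
      exact this
    have g52 : G (5/2) = (1/2 * Real.sqrt π) * G (3/2) := by
      have := hGrec (3/2) (by norm_num)
      have hg : Real.Gamma (3/2) = 1/2 * Real.sqrt π := by
        have := Real.Gamma_add_one (s := 1/2) (by norm_num)
        norm_num [Real.Gamma_one_half_eq] at this ⊢
        linarith
      norm_num [hg] at this ⊢
      linarith [this]
    have hpirw : π ^ (-(1:ℝ) - 1/2) = (π * Real.sqrt π)⁻¹ := by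
      rw [show (-(1:ℝ) - 1/2) = -(1 + 1/2) by ring, Real.rpow_neg pi_pos.le,
        Real.rpow_add pi_pos, Real.rpow_one, ← Real.sqrt_eq_rpow]
    have hs : Real.sqrt π ^ 2 = π := Real.sq_sqrt pi_pos.le
    have hsne : Real.sqrt π ≠ 0 := by positivity
    have hpine : π ≠ 0 := Real.pi_ne_zero
    push_cast
    norm_num [g2, g3, g32, g52]
    rw [show (-(3/2) : ℝ) = -(1:ℝ) - 1/2 by norm_num, hpirw]
    field_simp
    linear_combination (-1 : ℝ) * hs
  | succ n hn ih =>
    have hn0 : (0:ℝ) < (n:ℝ) := by exact_mod_cast hn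
    have key : G (2 * ((n:ℝ)+1) + 1) = Real.Gamma (2*n+2) * Real.Gamma (2*n+1) * G (2*n+1) := by
      have h1 : G ((2*(n:ℝ)+1) + 1) = Real.Gamma (2*n+1) * G (2*n+1) := hGrec _ (by positivity)
      have h2 : G ((2*(n:ℝ)+2) + 1) = Real.Gamma (2*n+2) * G (2*n+2) := hGrec _ (by positivity)
      have e : 2 * ((n:ℝ)+1) + 1 = (2*(n:ℝ)+2) + 1 := by ring
      have e2 : (2*(n:ℝ)+1) + 1 = 2*(n:ℝ)+2 := by ring
      rw [e, h2, ← e2, h1]; ring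
    have hA : G ((n:ℝ)+1+1/2) = Real.Gamma ((n:ℝ)+1/2) * G ((n:ℝ)+1/2) := by
      have := hGrec ((n:ℝ)+1/2) (by positivity)
      rw [show ((n:ℝ)+1/2) + 1 = (n:ℝ)+1+1/2 by ring] at this
      exact this
    have hB : G ((n:ℝ)+1+1) = Real.Gamma ((n:ℝ)+1) * G ((n:ℝ)+1) :=
      hGrec _ (by positivity)
    have hC : G ((n:ℝ)+1+3/2) = Real.Gamma ((n:ℝ)+3/2) * G ((n:ℝ)+3/2) := by
      have := hGrec ((n:ℝ)+3/2) (by positivity)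
      rw [show ((n:ℝ)+3/2) + 1 = (n:ℝ)+1+3/2 by ring] at this
      exact this
    have hexp : (n+1) * (2*(n+1) - 1) = n * (2*n - 1) + (4*n+1) := by
      obtain ⟨m, rfl⟩ := Nat.exists_eq_add_of_le hn
      have e1 : 2*(1+m+1) - 1 = 2*m+3 := by omega
      have e2 : 2*(1+m) - 1 = 2*m+1 := by omega
      rw [e1, e2]; ring
    have hpow : (2:ℝ) ^ ((n+1) * (2*(n+1) - 1))
        = 2 ^ (n * (2*n - 1)) * 2 ^ (4*n+1) := by rw [hexp, pow_add]
    have hpirw : π ^ (-((n:ℝ)+1) - 1/2) = π ^ (-(n:ℝ) - 1/2) * π⁻¹ := by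
      rw [show -((n:ℝ)+1) - 1/2 = (-(n:ℝ) - 1/2) + (-1) by ring,
        Real.rpow_add pi_pos, Real.rpow_neg_one]
    push_cast
    rw [key, ih, hpow, hpirw, hA, hB, hC]
    linear_combination (2 ^ (n * (2*n - 1)) * π ^ (-(n:ℝ) - 1/2) * (G (1/2))⁻¹^2 *
      G ((n:ℝ)+1/2) * G ((n:ℝ)+1)^2 * G ((n:ℝ)+3/2)) * gamma_key n
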